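/- Let A be a nonzero n×n complex matrix with ‖I + A‖ ≥ 1, where ‖·‖ is the operator norm induced by the Euclidean norm. Suppose there exists a unit vector u ∈ ℂⁿ such that ‖(I + A)u‖ = ‖I + A‖ and Au ≠ 0. Then the function t ↦ ‖I + tA‖ is strictly increasing on [1, ∞). -/

import Mathlib

open Matrix

set_option maxHeartbeats 1000000
set_option synthInstance.maxHeartbeats 200000

/-- The operator norm of a complex `n × n` matrix induced by the Euclidean norm on `ℂⁿ`. -/
noncomputable def euclOpNorm {n : ℕ} (M : Matrix (Fin n) (Fin n) ℂ) : ℝ :=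
  ‖Matrix.toEuclideanCLM (𝕜 := ℂ) M‖

/-- If `A ≠ 0`, `‖I + A‖ ≥ 1`, and the operator norm of `I + A` is attained at a unit
vector `u` with `Au ≠ 0`, then `t ↦ ‖I + tA‖` is strictly increasing on `[1, ∞)`. -/
theorem strictMonoOn_norm_one_add_smul {n : ℕ} (A : Matrix (Fin n) (Fin n) ℂ) (hA : A ≠ 0)
    (h : 1 ≤ euclOpNorm (1 + A))
    (hu : ∃ u : EuclideanSpace ℂ (Fin n), ‖u‖ = 1 ∧
      ‖Matrix.toEuclideanCLM (𝕜 := ℂ) (1 + A) u‖ = euclOpNorm (1 + A) ∧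
      Matrix.toEuclideanCLM (𝕜 := ℂ) A u ≠ 0) :
    StrictMonoOn (fun t : ℝ => euclOpNorm (1 + (t : ℂ) • A)) (Set.Ici 1) := by
  obtain ⟨u, hu1, huA, huAne⟩ := hu
  set B : EuclideanSpace ℂ (Fin n) →L[ℂ] EuclideanSpace ℂ (Fin n) :=
    Matrix.toEuclideanCLM (𝕜 := ℂ) A with hB
  have hsmul : ∀ t : ℝ, Matrix.toEuclideanCLM (𝕜 := ℂ) ((t:ℂ) • A) = (t:ℂ) • B := by
    intro t
    rw [hB]
    exact map_smul (Matrix.toEuclideanCLM (𝕜 := ℂ) :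
      Matrix (Fin n) (Fin n) ℂ ≃⋆ₐ[ℂ] _) _ _
  have hmap : ∀ t : ℝ, Matrix.toEuclideanCLM (𝕜 := ℂ) (1 + (t : ℂ) • A)
      = 1 + (t : ℂ) • B := by
    intro t
    rw [map_add, _root_.map_one, hsmul]
  set v := B u with hv
  have honeB : Matrix.toEuclideanCLM (𝕜 := ℂ) (1 + A) = 1 + B := by
    rw [map_add, _root_.map_one, hB]
  have huv : ‖u + v‖ = euclOpNorm (1 + A) := by
    rw [← huA, honeB]
    simp [hv, ContinuousLinearMap.add_apply]
  have hone : (1 : ℝ) ≤ ‖u + v‖ := by rw [huv]; exact h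
  have hc : (0:ℝ) < ‖v‖ ^ 2 := pow_pos (norm_pos_iff.2 huAne) 2
  set x : ℝ := (inner ℂ u v : ℂ).re with hx
  have hr : ∀ w : ℝ, ‖u + (w:ℂ) • v‖ ^ 2 = 1 + 2 * w * x + w ^ 2 * ‖v‖ ^ 2 := by
    intro w
    rw [@norm_add_sq ℂ, inner_smul_right, hu1, norm_smul, Complex.norm_real]
    simp [hx, RCLike.re_to_complex, Complex.re_ofReal_mul, Real.norm_eq_abs, mul_pow, sq_abs]
    ring
  have h1 : ‖u + v‖ ^ 2 = 1 + 2 * x + ‖v‖ ^ 2 := by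
    have := hr 1; simpa using this
  have h1' : (1:ℝ) ≤ 1 + 2 * x + ‖v‖ ^ 2 := by
    rw [← h1]; nlinarith [hone]
  have key1 : ∀ s : ℝ, 1 < s → ‖u + v‖ < ‖u + (s:ℂ) • v‖ := by
    intro s hs
    refine lt_of_pow_lt_pow_left₀ 2 (norm_nonneg _) ?_
    rw [hr s, h1]
    nlinarith [mul_nonneg (by linarith : (0:ℝ) ≤ s - 1) (by linarith : (0:ℝ) ≤ 2 * x + ‖v‖ ^ 2),
      mul_pos (mul_pos (by linarith : (0:ℝ) < s) (by linarith : (0:ℝ) < s - 1)) hc]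
  have hBu : ∀ s : ℝ, ‖u + (s:ℂ) • v‖
      ≤ ‖(1 : EuclideanSpace ℂ (Fin n) →L[ℂ] EuclideanSpace ℂ (Fin n)) + (s:ℂ) • B‖ := by
    intro s
    have := ((1 : EuclideanSpace ℂ (Fin n) →L[ℂ] EuclideanSpace ℂ (Fin n)) + (s:ℂ) • B).le_opNorm u
    simpa [ContinuousLinearMap.add_apply, hu1, hv] using this
  have hid : ‖(1 : EuclideanSpace ℂ (Fin n) →L[ℂ] EuclideanSpace ℂ (Fin n))‖ ≤ 1 := by
    simpa [ContinuousLinearMap.one_def] using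
      (ContinuousLinearMap.norm_id_le (E := EuclideanSpace ℂ (Fin n)))
  have key2 : ∀ s t : ℝ, 1 ≤ s → s < t →
      (t/s) * ‖(1 : EuclideanSpace ℂ (Fin n) →L[ℂ] EuclideanSpace ℂ (Fin n)) + (s:ℂ) • B‖ - (t/s - 1)
        ≤ ‖(1 : EuclideanSpace ℂ (Fin n) →L[ℂ] EuclideanSpace ℂ (Fin n)) + (t:ℂ) • B‖ := by
    intro s t hs hst
    have hs0 : (0:ℝ) < s := by linarith
    have hsC : (s : ℂ) ≠ 0 := by exact_mod_cast ne_of_gt hs0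
    set r : ℝ := t / s with hrdef
    have hr1 : 1 < r := (one_lt_div hs0).2 hst
    have hts : (t : ℂ) = (r : ℂ) * (s : ℂ) := by
      rw [hrdef]; push_cast; field_simp
    have hident : (r:ℂ) • ((1 : EuclideanSpace ℂ (Fin n) →L[ℂ] EuclideanSpace ℂ (Fin n)) + (s:ℂ) • B)
        = ((1 : EuclideanSpace ℂ (Fin n) →L[ℂ] EuclideanSpace ℂ (Fin n)) + (t:ℂ) • B)
          - (1 - (r:ℂ)) • 1 := by
      rw [hts]; module
    have habs : ‖(r:ℂ) • ((1 : EuclideanSpace ℂ (Fin n) →L[ℂ] EuclideanSpace ℂ (Fin n)) + (s:ℂ) • B)‖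
        ≤ ‖(1 : EuclideanSpace ℂ (Fin n) →L[ℂ] EuclideanSpace ℂ (Fin n)) + (t:ℂ) • B‖
          + ‖(1 - (r:ℂ)) • (1 : EuclideanSpace ℂ (Fin n) →L[ℂ] EuclideanSpace ℂ (Fin n))‖ := by
      rw [hident]; exact norm_sub_le _ _
    have e1 : ‖(r:ℂ) • ((1 : EuclideanSpace ℂ (Fin n) →L[ℂ] EuclideanSpace ℂ (Fin n)) + (s:ℂ) • B)‖
        = r * ‖(1 : EuclideanSpace ℂ (Fin n) →L[ℂ] EuclideanSpace ℂ (Fin n)) + (s:ℂ) • B‖ := by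
      rw [norm_smul ((r:ℝ):ℂ) ((1 : EuclideanSpace ℂ (Fin n) →L[ℂ] EuclideanSpace ℂ (Fin n)) + (s:ℂ) • B),
        Complex.norm_real, Real.norm_eq_abs, abs_of_pos (by linarith : (0:ℝ) < r)]
    have e2 : ‖(1 - (r:ℂ)) • (1 : EuclideanSpace ℂ (Fin n) →L[ℂ] EuclideanSpace ℂ (Fin n))‖
        ≤ r - 1 := by
      rw [norm_smul (1 - (r:ℂ)) (1 : EuclideanSpace ℂ (Fin n) →L[ℂ] EuclideanSpace ℂ (Fin n))]
      have h3 : ‖(1 - (r:ℂ))‖ = r - 1 := by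
        rw [show (1 - (r:ℂ)) = ((1 - r : ℝ) : ℂ) by push_cast; ring, Complex.norm_real,
          Real.norm_eq_abs, abs_of_nonpos (by linarith)]
        ring
      rw [h3]
      nlinarith [norm_nonneg (1 : EuclideanSpace ℂ (Fin n) →L[ℂ] EuclideanSpace ℂ (Fin n))]
    rw [e1] at habs
    linarith
  intro s hs t ht hst
  simp only [Set.mem_Ici] at hs ht
  show euclOpNorm (1 + (s:ℂ) • A) < euclOpNorm (1 + (t:ℂ) • A)
  rw [euclOpNorm, euclOpNorm, hmap, hmap]
  by_cases hseq : s = 1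
  · subst hseq
    calc ‖(1 : EuclideanSpace ℂ (Fin n) →L[ℂ] EuclideanSpace ℂ (Fin n)) + ((1:ℝ):ℂ) • B‖
        = ‖u + v‖ := by
          rw [huv, euclOpNorm, honeB]
          norm_num
      _ < ‖u + (t:ℂ) • v‖ := key1 t hst
      _ ≤ _ := hBu t
  · have hs1 : 1 < s := lt_of_le_of_ne hs (Ne.symm hseq)
    have hfs : 1 < ‖(1 : EuclideanSpace ℂ (Fin n) →L[ℂ] EuclideanSpace ℂ (Fin n)) + (s:ℂ) • B‖ :=
      lt_of_lt_of_le (lt_of_le_of_lt hone (key1 s hs1)) (hBu s)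
    have hk := key2 s t hs hst
    have hr1 : 1 < t / s := (one_lt_div (by linarith)).2 hst
    nlinarith [hk, hfs, hr1]
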